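/- In any right alternative superalgebra A (i.e., a Z_2-graded algebra satisfying as(x,y,z) = -(-1)^{|y||z|} as(x,z,y) for the associator as(x,y,z) = (xy)z - x(yz)), the identity as([w,x],y,z) = [w, as(x,y,z)] + (-1)^{|x|(|y|+|z|)}[as(w,y,z), x] - as(w,x,[y,z]) + (-1)^{|w||x|} as(x,w,[y,z]) holds for all homogeneous w,x,y,z, where [a,b] = (1/2)(ab - (-1)^{|a||b|} ba). -/
import Mathlib


def sgn (K : Type*) [Field K] (i j : ZMod 2) : K := (-1 : K) ^ (i * j).val

def IsBilin (K : Type*) {A : Type*} [Field K] [AddCommGroup A] [Module K A]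
    (f : A → A → A) : Prop :=
  (∀ (c : K) (x y : A), f (c • x) y = c • f x y) ∧
  (∀ x x' y : A, f (x + x') y = f x y + f x' y) ∧
  (∀ (c : K) (x y : A), f x (c • y) = c • f x y) ∧
  (∀ x y y' : A, f x (y + y') = f x y + f x y')

def IsTrilin (K : Type*) {A : Type*} [Field K] [AddCommGroup A] [Module K A]
    (f : A → A → A → A) : Prop :=
  (∀ (c : K) (x y z : A), f (c • x) y z = c • f x y z) ∧
  (∀ x x' y z : A, f (x + x') y z = f x y z + f x' y z) ∧
  (∀ (c : K) (x y z : A), f x (c • y) z = c • f x y z) ∧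
  (∀ x y y' z : A, f x (y + y') z = f x y z + f x y' z) ∧
  (∀ (c : K) (x y z : A), f x y (c • z) = c • f x y z) ∧
  (∀ x y z z' : A, f x y (z + z') = f x y z + f x y z')

def asc {A : Type*} [AddCommGroup A] (mul : A → A → A) (x y z : A) : A :=
  mul (mul x y) z - mul x (mul y z)

def hasc {A : Type*} [AddCommGroup A] (mul : A → A → A) (α : A → A) (x y z : A) : A :=
  mul (mul x y) (α z) - mul (α x) (mul y z)

def br (K : Type*) {A : Type*} [Field K] [AddCommGroup A] [Module K A]
    (mul : A → A → A) (i j : ZMod 2) (x y : A) : A :=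
  (2 : K)⁻¹ • (mul x y - sgn K i j • mul y x)

def jp (K : Type*) {A : Type*} [Field K] [AddCommGroup A] [Module K A]
    (mul : A → A → A) (i j : ZMod 2) (x y : A) : A :=
  (2 : K)⁻¹ • (mul x y + sgn K i j • mul y x)

set_option maxHeartbeats 2000000 in
/-- In any right alternative superalgebra, the identity (2.4) holds. -/
theorem stmt0 {K A : Type*} [Field K] [AddCommGroup A] [Module K A]
    (h2 : (2 : K) ≠ 0) (h3 : (3 : K) ≠ 0)
    (𝒜 : ZMod 2 → Submodule K A) (hds : DirectSum.IsInternal 𝒜)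
    (mul : A → A → A) (hbil : IsBilin K mul)
    (hgr : ∀ (i j : ZMod 2) (x y : A), x ∈ 𝒜 i → y ∈ 𝒜 j → mul x y ∈ 𝒜 (i + j))
    (halt : ∀ (i j k : ZMod 2) (x y z : A), x ∈ 𝒜 i → y ∈ 𝒜 j → z ∈ 𝒜 k →
      asc mul x y z = (-(sgn K j k)) • asc mul x z y)
    (p q r s : ZMod 2) (w x y z : A)
    (hw : w ∈ 𝒜 p) (hx : x ∈ 𝒜 q) (hy : y ∈ 𝒜 r) (hz : z ∈ 𝒜 s) :
    asc mul (br K mul p q w x) y z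
      = br K mul p (q + r + s) w (asc mul x y z)
        + sgn K q (r + s) • br K mul (p + r + s) q (asc mul w y z) x
        - asc mul w x (br K mul r s y z)
        + sgn K p q • asc mul x w (br K mul r s y z) := by
  obtain ⟨msl, mal, msr, mar⟩ := hbil
  have msubl : ∀ u v y : A, mul (u - v) y = mul u y - mul v y := fun u v y => by
    rw [sub_eq_add_neg, mal, ← neg_one_smul K v, msl, neg_one_smul, ← sub_eq_add_neg]
  have msubr : ∀ y u v : A, mul y (u - v) = mul y u - mul y v := fun y u v => by
    rw [sub_eq_add_neg, mar, ← neg_one_smul K v, msr, neg_one_smul, ← sub_eq_add_neg]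
  have hmwx : mul w x ∈ 𝒜 (p + q) := hgr p q w x hw hx
  have hmwy : mul w y ∈ 𝒜 (p + r) := hgr p r w y hw hy
  have hmwz : mul w z ∈ 𝒜 (p + s) := hgr p s w z hw hz
  have hmxw : mul x w ∈ 𝒜 (q + p) := hgr q p x w hx hw
  have hmxy : mul x y ∈ 𝒜 (q + r) := hgr q r x y hx hy
  have hmxz : mul x z ∈ 𝒜 (q + s) := hgr q s x z hx hz
  have hmyw : mul y w ∈ 𝒜 (r + p) := hgr r p y w hy hw
  have hmyx : mul y x ∈ 𝒜 (r + q) := hgr r q y x hy hx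
  have hmyz : mul y z ∈ 𝒜 (r + s) := hgr r s y z hy hz
  have hmzw : mul z w ∈ 𝒜 (s + p) := hgr s p z w hz hw
  have hmzx : mul z x ∈ 𝒜 (s + q) := hgr s q z x hz hx
  have hmzy : mul z y ∈ 𝒜 (s + r) := hgr s r z y hz hy
  have H1 : mul w (asc mul x y z) = (-(sgn K r s)) • mul w (asc mul x z y) := by
    rw [halt q r s x y z hx hy hz, msr]
  have H2 : mul w (asc mul y x z) = (-(sgn K q s)) • mul w (asc mul y z x) := by
    rw [halt r q s y x z hy hx hz, msr]
  have H3 : mul w (asc mul z x y) = (-(sgn K q r)) • mul w (asc mul z y x) := by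
    rw [halt s q r z x y hz hx hy, msr]
  have H4 : mul x (asc mul w y z) = (-(sgn K r s)) • mul x (asc mul w z y) := by
    rw [halt p r s w y z hw hy hz, msr]
  have H5 : mul x (asc mul y w z) = (-(sgn K p s)) • mul x (asc mul y z w) := by
    rw [halt r p s y w z hy hw hz, msr]
  have H6 : mul x (asc mul z w y) = (-(sgn K p r)) • mul x (asc mul z y w) := by
    rw [halt s p r z w y hz hw hy, msr]
  have H7 := halt p q (r + s) w x (mul y z) hw hx hmyz
  have H8 := halt p q (s + r) w x (mul z y) hw hx hmzy
  have H9 := halt p r (s + q) w y (mul z x) hw hy hmzx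
  have H10 := halt p (q + r) s w (mul x y) z hw hmxy hz
  have H11 := halt p (q + s) r w (mul x z) y hw hmxz hy
  have H12 := halt p (r + q) s w (mul y x) z hw hmyx hz
  have H13 := halt q p (r + s) x w (mul y z) hx hw hmyz
  have H14 := halt q p (s + r) x w (mul z y) hx hw hmzy
  have H15 := halt q r (s + p) x y (mul z w) hx hy hmzw
  have H16 := halt q (p + r) s x (mul w y) z hx hmwy hz
  have H17 := halt q (p + s) r x (mul w z) y hx hmwz hy
  have H18 := halt q (r + p) s x (mul y w) z hx hmyw hz
  have H19 := halt (p + q) r s (mul w x) y z hmwx hy hz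
  have H20 := halt (p + r) q s (mul w y) x z hmwy hx hz
  have H21 := halt (p + s) q r (mul w z) x y hmwz hx hy
  have H22 := halt (q + p) r s (mul x w) y z hmxw hy hz
  have H23 := halt (q + r) p s (mul x y) w z hmxy hw hz
  have H24 := halt (q + s) p r (mul x z) w y hmxz hw hy
  have H25 : mul (asc mul x y z) w = (-(sgn K r s)) • mul (asc mul x z y) w := by
    rw [halt q r s x y z hx hy hz, msl]
  have H26 : mul (asc mul w y z) x = (-(sgn K r s)) • mul (asc mul w z y) x := by
    rw [halt p r s w y z hw hy hz, msl]
  have H27 : mul (asc mul w x z) y = (-(sgn K q s)) • mul (asc mul w z x) y := by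
    rw [halt p q s w x z hw hx hz, msl]
  have H28 : mul (asc mul x w z) y = (-(sgn K p s)) • mul (asc mul x z w) y := by
    rw [halt q p s x w z hx hw hz, msl]
  have H29 : mul (asc mul w x y) z = (-(sgn K q r)) • mul (asc mul w y x) z := by
    rw [halt p q r w x y hw hx hy, msl]
  have H30 : mul (asc mul x w y) z = (-(sgn K p r)) • mul (asc mul x y w) z := by
    rw [halt q p r x w y hx hw hy, msl]
  have e2 : ∀ i : ZMod 2, i = 0 ∨ i = 1 := by decide
  have za00 : ((0:ZMod 2) + 0) = 0 := rfl
  have za01 : ((0:ZMod 2) + 1) = 1 := rfl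
  have za10 : ((1:ZMod 2) + 0) = 1 := rfl
  have za11 : ((1:ZMod 2) + 1) = 0 := rfl
  have zs00 : sgn K 0 0 = 1 := by
    rw [sgn]; norm_num [show (((0:ZMod 2)) * 0).val = 0 from rfl, show ((0:ZMod 2)).val = 0 from rfl]
  have zs01 : sgn K 0 1 = 1 := by
    rw [sgn]; norm_num [show (((0:ZMod 2)) * 1).val = 0 from rfl, show ((0:ZMod 2)).val = 0 from rfl]
  have zs10 : sgn K 1 0 = 1 := by
    rw [sgn]; norm_num [show (((1:ZMod 2)) * 0).val = 0 from rfl, show ((0:ZMod 2)).val = 0 from rfl]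
  have zs11 : sgn K 1 1 = -1 := by
    rw [sgn]; norm_num [show (((1:ZMod 2)) * 1).val = 1 from rfl, show ((1:ZMod 2)).val = 1 from rfl]
  have key2 : (2:K) • asc mul (mul w x - sgn K p q • mul x w) y z
      = (2:K) • ((mul w (asc mul x y z) - sgn K p (q + r + s) • mul (asc mul x y z) w)
        + sgn K q (r + s) • (mul (asc mul w y z) x - sgn K (p + r + s) q • mul x (asc mul w y z))
        - asc mul w x (mul y z - sgn K r s • mul z y)
        + sgn K p q • asc mul x w (mul y z - sgn K r s • mul z y)) := by
    simp only [asc, smul_sub, smul_smul, msl, msr, mal, mar, msubl, msubr] at H1 H2 H3 H4 H5 H6 H7 H8 H9 H10 H11 H12 H13 H14 H15 H16 H17 H18 H19 H20 H21 H22 H23 H24 H25 H26 H27 H28 H29 H30 ⊢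
    rcases e2 p with rfl | rfl <;> rcases e2 q with rfl | rfl <;> rcases e2 r with rfl | rfl <;> rcases e2 s with rfl | rfl
    · -- case 0000
      simp only [za00, za01, za10, za11, zs00, zs01, zs10, zs11] at H1 H2 H3 H4 H5 H6 H7 H8 H9 H10 H11 H12 H13 H14 H15 H16 H17 H18 H19 H20 H21 H22 H23 H24 H25 H26 H27 H28 H29 H30 ⊢
      linear_combination (norm := module) -H1 + H2 - H3 + H4 - H5 + H6 + H7 - H8 - H9 + H10 - H11 + H12 - H13 + H14 + H15 - H16 + H17 - H18 + H19 - H20 + H21 - H22 + H23 - H24 + H25 - H26 - H27 + H28 + H29 - H30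
    · -- case 0001
      simp only [za00, za01, za10, za11, zs00, zs01, zs10, zs11] at H1 H2 H3 H4 H5 H6 H7 H8 H9 H10 H11 H12 H13 H14 H15 H16 H17 H18 H19 H20 H21 H22 H23 H24 H25 H26 H27 H28 H29 H30 ⊢
      linear_combination (norm := module) -H1 + H2 - H3 + H4 - H5 + H6 + H7 - H8 - H9 + H10 - H11 + H12 - H13 + H14 + H15 - H16 + H17 - H18 + H19 - H20 + H21 - H22 + H23 - H24 + H25 - H26 - H27 + H28 + H29 - H30
    · -- case 0010
      simp only [za00, za01, za10, za11, zs00, zs01, zs10, zs11] at H1 H2 H3 H4 H5 H6 H7 H8 H9 H10 H11 H12 H13 H14 H15 H16 H17 H18 H19 H20 H21 H22 H23 H24 H25 H26 H27 H28 H29 H30 ⊢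
      linear_combination (norm := module) -H1 + H2 - H3 + H4 - H5 + H6 + H7 - H8 - H9 + H10 - H11 + H12 - H13 + H14 + H15 - H16 + H17 - H18 + H19 - H20 + H21 - H22 + H23 - H24 + H25 - H26 - H27 + H28 + H29 - H30
    · -- case 0011
      simp only [za00, za01, za10, za11, zs00, zs01, zs10, zs11] at H1 H2 H3 H4 H5 H6 H7 H8 H9 H10 H11 H12 H13 H14 H15 H16 H17 H18 H19 H20 H21 H22 H23 H24 H25 H26 H27 H28 H29 H30 ⊢
      linear_combination (norm := module) -H1 + H2 + H3 + H4 - H5 - H6 + H7 + H8 - H9 + H10 + H11 + H12 - H13 - H14 + H15 - H16 - H17 - H18 + H19 - H20 - H21 - H22 + H23 + H24 + H25 - H26 + H27 - H28 + H29 - H30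
    · -- case 0100
      simp only [za00, za01, za10, za11, zs00, zs01, zs10, zs11] at H1 H2 H3 H4 H5 H6 H7 H8 H9 H10 H11 H12 H13 H14 H15 H16 H17 H18 H19 H20 H21 H22 H23 H24 H25 H26 H27 H28 H29 H30 ⊢
      linear_combination (norm := module) -H1 + H2 - H3 + H4 - H5 + H6 + H7 - H8 - H9 + H10 - H11 + H12 - H13 + H14 + H15 - H16 + H17 - H18 + H19 - H20 + H21 - H22 + H23 - H24 + H25 - H26 - H27 + H28 + H29 - H30
    · -- case 0101
      simp only [za00, za01, za10, za11, zs00, zs01, zs10, zs11] at H1 H2 H3 H4 H5 H6 H7 H8 H9 H10 H11 H12 H13 H14 H15 H16 H17 H18 H19 H20 H21 H22 H23 H24 H25 H26 H27 H28 H29 H30 ⊢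
      linear_combination (norm := module) -H1 + H2 + H3 + H4 - H5 + H6 + H7 - H8 + H9 + H10 - H11 + H12 - H13 + H14 + H15 - H16 + H17 - H18 + H19 - H20 - H21 - H22 + H23 - H24 + H25 + H26 - H27 + H28 + H29 - H30
    · -- case 0110
      simp only [za00, za01, za10, za11, zs00, zs01, zs10, zs11] at H1 H2 H3 H4 H5 H6 H7 H8 H9 H10 H11 H12 H13 H14 H15 H16 H17 H18 H19 H20 H21 H22 H23 H24 H25 H26 H27 H28 H29 H30 ⊢
      linear_combination (norm := module) -H1 - H2 - H3 + H4 - H5 + H6 + H7 - H8 + H9 + H10 - H11 - H12 - H13 + H14 + H15 - H16 + H17 - H18 + H19 + H20 + H21 - H22 + H23 - H24 + H25 + H26 - H27 + H28 + H29 - H30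
    · -- case 0111
      simp only [za00, za01, za10, za11, zs00, zs01, zs10, zs11] at H1 H2 H3 H4 H5 H6 H7 H8 H9 H10 H11 H12 H13 H14 H15 H16 H17 H18 H19 H20 H21 H22 H23 H24 H25 H26 H27 H28 H29 H30 ⊢
      linear_combination (norm := module) -H1 - H2 - H3 + H4 - H5 - H6 + H7 + H8 - H9 + H10 + H11 - H12 - H13 - H14 + H15 - H16 - H17 - H18 + H19 + H20 + H21 - H22 + H23 + H24 + H25 - H26 + H27 - H28 + H29 - H30
    · -- case 1000
      simp only [za00, za01, za10, za11, zs00, zs01, zs10, zs11] at H1 H2 H3 H4 H5 H6 H7 H8 H9 H10 H11 H12 H13 H14 H15 H16 H17 H18 H19 H20 H21 H22 H23 H24 H25 H26 H27 H28 H29 H30 ⊢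
      linear_combination (norm := module) -H1 + H2 - H3 + H4 - H5 + H6 + H7 - H8 - H9 + H10 - H11 + H12 - H13 + H14 + H15 - H16 + H17 - H18 + H19 - H20 + H21 - H22 + H23 - H24 + H25 - H26 - H27 + H28 + H29 - H30
    · -- case 1001
      simp only [za00, za01, za10, za11, zs00, zs01, zs10, zs11] at H1 H2 H3 H4 H5 H6 H7 H8 H9 H10 H11 H12 H13 H14 H15 H16 H17 H18 H19 H20 H21 H22 H23 H24 H25 H26 H27 H28 H29 H30 ⊢
      linear_combination (norm := module) -H1 + H2 - H3 + H4 - H5 - H6 + H7 - H8 - H9 + H10 - H11 + H12 - H13 + H14 - H15 - H16 + H17 - H18 + H19 - H20 + H21 - H22 + H23 + H24 - H25 - H26 - H27 + H28 + H29 - H30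
    · -- case 1010
      simp only [za00, za01, za10, za11, zs00, zs01, zs10, zs11] at H1 H2 H3 H4 H5 H6 H7 H8 H9 H10 H11 H12 H13 H14 H15 H16 H17 H18 H19 H20 H21 H22 H23 H24 H25 H26 H27 H28 H29 H30 ⊢
      linear_combination (norm := module) -H1 + H2 - H3 + H4 + H5 + H6 + H7 - H8 - H9 + H10 - H11 + H12 - H13 + H14 - H15 - H16 + H17 + H18 + H19 - H20 + H21 - H22 - H23 - H24 - H25 - H26 - H27 + H28 + H29 - H30
    · -- case 1011
      simp only [za00, za01, za10, za11, zs00, zs01, zs10, zs11] at H1 H2 H3 H4 H5 H6 H7 H8 H9 H10 H11 H12 H13 H14 H15 H16 H17 H18 H19 H20 H21 H22 H23 H24 H25 H26 H27 H28 H29 H30 ⊢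
      linear_combination (norm := module) -H1 + H2 + H3 + H4 + H5 + H6 + H7 + H8 - H9 + H10 + H11 + H12 - H13 - H14 + H15 - H16 - H17 + H18 + H19 - H20 - H21 - H22 - H23 - H24 + H25 - H26 + H27 - H28 + H29 - H30
    · -- case 1100
      simp only [za00, za01, za10, za11, zs00, zs01, zs10, zs11] at H1 H2 H3 H4 H5 H6 H7 H8 H9 H10 H11 H12 H13 H14 H15 H16 H17 H18 H19 H20 H21 H22 H23 H24 H25 H26 H27 H28 H29 H30 ⊢
      linear_combination (norm := module) -H1 + H2 - H3 - H4 + H5 - H6 + H7 - H8 - H9 + H10 - H11 + H12 + H13 - H14 - H15 + H16 - H17 + H18 + H19 - H20 + H21 + H22 - H23 + H24 - H25 - H26 - H27 - H28 + H29 + H30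
    · -- case 1101
      simp only [za00, za01, za10, za11, zs00, zs01, zs10, zs11] at H1 H2 H3 H4 H5 H6 H7 H8 H9 H10 H11 H12 H13 H14 H15 H16 H17 H18 H19 H20 H21 H22 H23 H24 H25 H26 H27 H28 H29 H30 ⊢
      linear_combination (norm := module) -H1 + H2 + H3 - H4 + H5 + H6 + H7 - H8 + H9 + H10 - H11 + H12 + H13 - H14 + H15 + H16 - H17 + H18 + H19 - H20 - H21 + H22 - H23 - H24 + H25 + H26 - H27 - H28 + H29 + H30
    · -- case 1110
      simp only [za00, za01, za10, za11, zs00, zs01, zs10, zs11] at H1 H2 H3 H4 H5 H6 H7 H8 H9 H10 H11 H12 H13 H14 H15 H16 H17 H18 H19 H20 H21 H22 H23 H24 H25 H26 H27 H28 H29 H30 ⊢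
      linear_combination (norm := module) -H1 - H2 - H3 - H4 - H5 - H6 + H7 - H8 + H9 + H10 - H11 - H12 + H13 - H14 + H15 + H16 - H17 - H18 + H19 + H20 + H21 + H22 + H23 + H24 + H25 + H26 - H27 - H28 + H29 + H30
    · -- case 1111
      simp only [za00, za01, za10, za11, zs00, zs01, zs10, zs11] at H1 H2 H3 H4 H5 H6 H7 H8 H9 H10 H11 H12 H13 H14 H15 H16 H17 H18 H19 H20 H21 H22 H23 H24 H25 H26 H27 H28 H29 H30 ⊢
      linear_combination (norm := module) -H1 - H2 - H3 - H4 - H5 - H6 + H7 + H8 - H9 + H10 + H11 - H12 + H13 + H14 - H15 + H16 + H17 - H18 + H19 + H20 + H21 + H22 + H23 + H24 - H25 - H26 + H27 + H28 + H29 + H30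
  simp only [br, asc, smul_sub, smul_smul, msl, msr, mal, mar, msubl, msubr] at key2 ⊢
  linear_combination (norm := (match_scalars <;> field_simp [h2] <;> ring1)) ((2:K)⁻¹ * (2:K)⁻¹) • key2
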